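/- (Harmonicity of the flow force flux function.) Let γ be real and ε₁ > 0. Suppose η, ζ, ϑ : ℝ×[0,1] → ℝ are twice continuously differentiable on the closed strip, harmonic in R, vanish identically on B, and satisfy η_x² + η_y² > 0 everywhere on the closed strip. Define Φ(x,y) := ∫₀^y [ (η_y(ζ_y² − ζ_x²) + 2η_x ζ_x ζ_y)/(η_x² + η_y²) + ε₁·(η_y(ϑ_y² − ϑ_x²) + 2η_x ϑ_x ϑ_y)/(η_x² + η_y²) + (1 − γ²)·η_y + 2(γ − 1 − ε₁/2) ](x,t) dt. Then Φ is harmonic in R, and Φ = 0 on B. -/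

import Mathlib

open Set Filter Topology


/-- The closed strip `ℝ × [0,1]`. -/
def strip : Set (ℝ × ℝ) := {p : ℝ × ℝ | p.2 ∈ Set.Icc (0 : ℝ) 1}

/-- The open strip `R = ℝ × (0,1)`. -/
def stripO : Set (ℝ × ℝ) := {p : ℝ × ℝ | p.2 ∈ Set.Ioo (0 : ℝ) 1}

/-- Partial derivative in the first (horizontal) variable, taken within the closed strip
(at interior points it agrees with the usual partial derivative; on the boundary it is
the one-sided partial derivative). -/
noncomputable def pdx (f : ℝ × ℝ → ℝ) (p : ℝ × ℝ) : ℝ := fderivWithin ℝ f strip p (1, 0)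

/-- Partial derivative in the second (vertical) variable, taken within the closed strip. -/
noncomputable def pdy (f : ℝ × ℝ → ℝ) (p : ℝ × ℝ) : ℝ := fderivWithin ℝ f strip p (0, 1)

lemma isOpen_stripO : IsOpen stripO := isOpen_Ioo.preimage continuous_snd
lemma stripO_subset : stripO ⊆ strip := fun p hp => ⟨le_of_lt hp.1, le_of_lt hp.2⟩
lemma strip_mem_nhds {p : ℝ × ℝ} (hp : p ∈ stripO) : strip ∈ 𝓝 p :=
  Filter.mem_of_superset (isOpen_stripO.mem_nhds hp) stripO_subset
lemma uniqueDiffOn_strip : UniqueDiffOn ℝ strip := by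
  apply uniqueDiffOn_convex
  · have : strip = Set.univ ×ˢ Set.Icc (0:ℝ) 1 := by
      ext p; simp [strip, Set.mem_prod]
    rw [this]; exact convex_univ.prod (convex_Icc 0 1)
  · refine ⟨((0:ℝ), (1/2:ℝ)), ?_⟩
    have : ((0:ℝ), (1/2:ℝ)) ∈ stripO := by constructor <;> norm_num
    exact (isOpen_stripO.subset_interior_iff.2 stripO_subset) this

lemma mem_strip_mk {x t : ℝ} (h0 : 0 ≤ t) (h1 : t ≤ 1) : (x, t) ∈ strip := ⟨h0, h1⟩

section SecondDeriv

variable {f : ℝ × ℝ → ℝ} (hf : ContDiffOn ℝ 2 f strip) {p : ℝ × ℝ} (hp : p ∈ stripO)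

/-- Eventual equality of `fderivWithin` and `fderiv` near interior points. -/
lemma pd_eventuallyEq (v : ℝ × ℝ) (hp : p ∈ stripO) :
    (fun q => fderivWithin ℝ f strip q v) =ᶠ[𝓝 p] (fun q => fderiv ℝ f q v) := by
  filter_upwards [isOpen_stripO.mem_nhds hp] with q hq
  rw [fderivWithin_of_mem_nhds (strip_mem_nhds hq)]

include hf hp in
lemma hasFDerivAt_pd (v : ℝ × ℝ) :
    HasFDerivAt (fun q => fderivWithin ℝ f strip q v)
      ((ContinuousLinearMap.apply ℝ ℝ v).comp (fderiv ℝ (fderiv ℝ f) p)) p := by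
  have hc2 : ContDiffAt ℝ 2 f p := hf.contDiffAt (strip_mem_nhds hp)
  have h1 : ContDiffAt ℝ 1 (fderiv ℝ f) p := hc2.fderiv_right (le_refl _)
  have hA : HasFDerivAt (fderiv ℝ f) (fderiv ℝ (fderiv ℝ f) p) p :=
    (h1.differentiableAt one_ne_zero).hasFDerivAt
  exact ((ContinuousLinearMap.apply ℝ ℝ v).hasFDerivAt.comp p hA).congr_of_eventuallyEq
    (pd_eventuallyEq v hp)

include hf hp in
/-- slice derivatives of partial-derivative functions, x-direction. -/
lemma hasDerivAt_pd_x (v : ℝ × ℝ) :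
    HasDerivAt (fun s => fderivWithin ℝ f strip (s, p.2) v)
      (fderiv ℝ (fderiv ℝ f) p (1, 0) v) p.1 := by
  have hline : HasDerivAt (fun s : ℝ => ((s, p.2) : ℝ × ℝ)) ((1:ℝ), (0:ℝ)) p.1 :=
    (hasDerivAt_id p.1).prodMk (hasDerivAt_const p.1 p.2)
  have := (hasFDerivAt_pd hf hp v).comp_hasDerivAt p.1 (by simpa using hline)
  exact this

include hf hp in
/-- slice derivatives of partial-derivative functions, y-direction. -/
lemma hasDerivAt_pd_y (v : ℝ × ℝ) :
    HasDerivAt (fun t => fderivWithin ℝ f strip (p.1, t) v)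
      (fderiv ℝ (fderiv ℝ f) p (0, 1) v) p.2 := by
  have hline : HasDerivAt (fun t : ℝ => ((p.1, t) : ℝ × ℝ)) ((0:ℝ), (1:ℝ)) p.2 :=
    (hasDerivAt_const p.2 p.1).prodMk (hasDerivAt_id p.2)
  have := (hasFDerivAt_pd hf hp v).comp_hasDerivAt p.2 (by simpa using hline)
  exact this

include hf hp in
lemma pd_symm : fderiv ℝ (fderiv ℝ f) p (1, 0) (0, 1) = fderiv ℝ (fderiv ℝ f) p (0, 1) (1, 0) :=
  (hf.contDiffAt (strip_mem_nhds hp)).isSymmSndFDerivAt (by simp) (1, 0) (0, 1)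

include hf hp in
/-- translation of the `pdx (pdx f) + pdy (pdy f)` harmonicity into second fderivs. -/
lemma harmonic_translate (hH : pdx (pdx f) p + pdy (pdy f) p = 0) :
    fderiv ℝ (fderiv ℝ f) p (0, 1) (0, 1) = - fderiv ℝ (fderiv ℝ f) p (1, 0) (1, 0) := by
  have hx : pdx (pdx f) p = fderiv ℝ (fderiv ℝ f) p (1, 0) (1, 0) := by
    have h1 : pdx (pdx f) p
        = fderivWithin ℝ (fun q => fderivWithin ℝ f strip q (1, 0)) strip p (1, 0) := rfl
    rw [h1, fderivWithin_of_mem_nhds (strip_mem_nhds hp),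
      (hasFDerivAt_pd hf hp ((1:ℝ), (0:ℝ))).fderiv]; rfl
  have hy : pdy (pdy f) p = fderiv ℝ (fderiv ℝ f) p (0, 1) (0, 1) := by
    have h1 : pdy (pdy f) p
        = fderivWithin ℝ (fun q => fderivWithin ℝ f strip q (0, 1)) strip p (0, 1) := rfl
    rw [h1, fderivWithin_of_mem_nhds (strip_mem_nhds hp),
      (hasFDerivAt_pd hf hp ((0:ℝ), (1:ℝ))).fderiv]; rfl
  rw [hx, hy] at hH; linarith

end SecondDeriv

section C1

variable {f : ℝ × ℝ → ℝ}

lemma contDiffOn_pd (hf : ContDiffOn ℝ 2 f strip) (v : ℝ × ℝ) :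
    ContDiffOn ℝ 1 (fun q => fderivWithin ℝ f strip q v) strip := by
  have h1 : ContDiffOn ℝ 1 (fderivWithin ℝ f strip) strip :=
    hf.fderivWithin uniqueDiffOn_strip (by norm_num)
  exact (ContinuousLinearMap.apply ℝ ℝ v).contDiff.comp_contDiffOn h1

lemma contDiffOn_pdx (hf : ContDiffOn ℝ 2 f strip) : ContDiffOn ℝ 1 (pdx f) strip :=
  contDiffOn_pd hf _

lemma contDiffOn_pdy (hf : ContDiffOn ℝ 2 f strip) : ContDiffOn ℝ 1 (pdy f) strip :=
  contDiffOn_pd hf _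

lemma pdx_boundary (hf : ContDiffOn ℝ 2 f strip) (h0 : ∀ x : ℝ, f (x, 0) = 0) (x : ℝ) :
    pdx f (x, 0) = 0 := by
  have hmem : ((x, 0) : ℝ × ℝ) ∈ strip := ⟨le_refl 0, by norm_num⟩
  have hdiff : DifferentiableWithinAt ℝ f strip (x, 0) :=
    (hf.differentiableOn (by norm_num)) _ hmem
  have hline : HasDerivWithinAt (fun s : ℝ => ((s, (0:ℝ)) : ℝ × ℝ)) ((1:ℝ), (0:ℝ)) Set.univ x :=
    (((hasDerivAt_id x).prodMk (hasDerivAt_const x (0:ℝ)))).hasDerivWithinAt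
  have hmaps : Set.MapsTo (fun s : ℝ => ((s, (0:ℝ)) : ℝ × ℝ)) Set.univ strip :=
    fun s _ => ⟨le_refl 0, by norm_num⟩
  have hcomp := hdiff.hasFDerivWithinAt.comp_hasDerivWithinAt x hline hmaps
  have hzero : HasDerivWithinAt (fun s : ℝ => f (s, 0)) 0 Set.univ x := by
    have : (fun s : ℝ => f (s, 0)) = fun _ : ℝ => (0:ℝ) := funext h0
    rw [this]; exact (hasDerivAt_const x 0).hasDerivWithinAt
  have := (hcomp.hasDerivAt Filter.univ_mem).unique (hzero.hasDerivAt Filter.univ_mem)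
  simpa [pdx] using this

end C1

section Form

/-- The common algebraic form of the integrand `F` and its conjugate `G`. -/
noncomputable def Fform (ε₁ k C u1 u2 v1 v2 w1 w2 : ℝ) : ℝ :=
  (u2 * (v2^2 - v1^2) + 2*u1*v1*v2) / (u1^2 + u2^2)
  + ε₁ * ((u2 * (w2^2 - w1^2) + 2*u1*w1*w2) / (u1^2 + u2^2))
  + k * u2 + C

/-- The derivative of `Fform` along a curve. -/
noncomputable def Dform (ε₁ k u1 u2 v1 v2 w1 w2 U1 U2 V1 V2 W1 W2 : ℝ) : ℝ :=
  ((U2*(v2^2-v1^2) + u2*(2*v2*V2 - 2*v1*V1) + 2*(U1*v1*v2 + u1*V1*v2 + u1*v1*V2)) * (u1^2+u2^2)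
    - (u2*(v2^2-v1^2)+2*u1*v1*v2)*(2*u1*U1+2*u2*U2)) / (u1^2+u2^2)^2
  + ε₁ * (((U2*(w2^2-w1^2) + u2*(2*w2*W2 - 2*w1*W1) + 2*(U1*w1*w2 + u1*W1*w2 + u1*w1*W2))
      * (u1^2+u2^2)
    - (u2*(w2^2-w1^2)+2*u1*w1*w2)*(2*u1*U1+2*u2*U2)) / (u1^2+u2^2)^2)
  + k * U2

lemma hasDerivAt_Fform {u1 u2 v1 v2 w1 w2 : ℝ → ℝ} {U1 U2 V1 V2 W1 W2 x : ℝ}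
    (h1 : HasDerivAt u1 U1 x) (h2 : HasDerivAt u2 U2 x)
    (h3 : HasDerivAt v1 V1 x) (h4 : HasDerivAt v2 V2 x)
    (h5 : HasDerivAt w1 W1 x) (h6 : HasDerivAt w2 W2 x)
    (hden : (u1 x)^2 + (u2 x)^2 ≠ 0) (ε₁ k C : ℝ) :
    HasDerivAt (fun s => Fform ε₁ k C (u1 s) (u2 s) (v1 s) (v2 s) (w1 s) (w2 s))
      (Dform ε₁ k (u1 x) (u2 x) (v1 x) (v2 x) (w1 x) (w2 x) U1 U2 V1 V2 W1 W2) x := by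
  have hden' : HasDerivAt (fun s => (u1 s)^2 + (u2 s)^2) (2*(u1 x)*U1 + 2*(u2 x)*U2) x := by
    have := ((h1.fun_pow 2).fun_add (h2.fun_pow 2))
    refine this.congr_deriv ?_; norm_num
  have hnum1 : HasDerivAt (fun s => u2 s * ((v2 s)^2 - (v1 s)^2) + 2*(u1 s)*(v1 s)*(v2 s))
      (U2*((v2 x)^2-(v1 x)^2) + u2 x*(2*(v2 x)*V2 - 2*(v1 x)*V1)
        + 2*(U1*(v1 x)*(v2 x) + u1 x*V1*(v2 x) + u1 x*(v1 x)*V2)) x := by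
    have := (h2.fun_mul ((h4.fun_pow 2).fun_sub (h3.fun_pow 2))).fun_add
      ((((hasDerivAt_const x (2:ℝ)).fun_mul h1).fun_mul h3).fun_mul h4)
    refine this.congr_deriv ?_; norm_num; ring
  have hnum2 : HasDerivAt (fun s => u2 s * ((w2 s)^2 - (w1 s)^2) + 2*(u1 s)*(w1 s)*(w2 s))
      (U2*((w2 x)^2-(w1 x)^2) + u2 x*(2*(w2 x)*W2 - 2*(w1 x)*W1)
        + 2*(U1*(w1 x)*(w2 x) + u1 x*W1*(w2 x) + u1 x*(w1 x)*W2)) x := by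
    have := (h2.fun_mul ((h6.fun_pow 2).fun_sub (h5.fun_pow 2))).fun_add
      ((((hasDerivAt_const x (2:ℝ)).fun_mul h1).fun_mul h5).fun_mul h6)
    refine this.congr_deriv ?_; norm_num; ring
  have hq1 := hnum1.fun_div hden' hden
  have hq2 := hnum2.fun_div hden' hden
  have htot := ((hq1.fun_add ((hasDerivAt_const x ε₁).fun_mul hq2)).fun_add
      ((hasDerivAt_const x k).fun_mul h2)).fun_add (hasDerivAt_const x C)
  refine htot.congr_deriv ?_
  simp only [Dform]; ring

end Form

section Context

variable (γ ε₁ : ℝ) (η ζ ϑ : ℝ × ℝ → ℝ)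

/-- The integrand of `Φ`. -/
noncomputable def Fc : ℝ × ℝ → ℝ := fun q =>
  Fform ε₁ (1-γ^2) (2*(γ-1-ε₁/2)) (pdx η q) (pdy η q) (pdx ζ q) (pdy ζ q) (pdx ϑ q) (pdy ϑ q)

/-- The conjugate function, which is the `x`-partial of `Φ`. -/
noncomputable def Gc : ℝ × ℝ → ℝ := fun q =>
  Fform ε₁ (1-γ^2) 0 (pdy η q) (pdx η q) (pdy ζ q) (pdx ζ q) (pdy ϑ q) (pdx ϑ q)

variable {η ζ ϑ}
variable (hηC : ContDiffOn ℝ 2 η strip) (hζC : ContDiffOn ℝ 2 ζ strip)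
    (hϑC : ContDiffOn ℝ 2 ϑ strip)
    (hgrad : ∀ p ∈ strip, 0 < (pdx η p) ^ 2 + (pdy η p) ^ 2)

include hηC hζC hϑC hgrad in
lemma contDiffOn_Fc : ContDiffOn ℝ 1 (Fc γ ε₁ η ζ ϑ) strip := by
  have hden : ∀ q ∈ strip, (pdx η q)^2 + (pdy η q)^2 ≠ 0 := fun q hq => (hgrad q hq).ne'
  have hD : ContDiffOn ℝ 1 (fun q => (pdx η q)^2 + (pdy η q)^2) strip :=
    ((contDiffOn_pdx hηC).pow 2).add ((contDiffOn_pdy hηC).pow 2)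
  have hN1 : ContDiffOn ℝ 1
      (fun q => pdy η q * ((pdy ζ q)^2 - (pdx ζ q)^2) + 2*(pdx η q)*(pdx ζ q)*(pdy ζ q)) strip :=
    ((contDiffOn_pdy hηC).mul (((contDiffOn_pdy hζC).pow 2).sub ((contDiffOn_pdx hζC).pow 2))).add
      (((contDiffOn_const.mul (contDiffOn_pdx hηC)).mul (contDiffOn_pdx hζC)).mul
        (contDiffOn_pdy hζC))
  have hN2 : ContDiffOn ℝ 1
      (fun q => pdy η q * ((pdy ϑ q)^2 - (pdx ϑ q)^2) + 2*(pdx η q)*(pdx ϑ q)*(pdy ϑ q)) strip :=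
    ((contDiffOn_pdy hηC).mul (((contDiffOn_pdy hϑC).pow 2).sub ((contDiffOn_pdx hϑC).pow 2))).add
      (((contDiffOn_const.mul (contDiffOn_pdx hηC)).mul (contDiffOn_pdx hϑC)).mul
        (contDiffOn_pdy hϑC))
  exact (((hN1.div hD hden).add (contDiffOn_const.mul (hN2.div hD hden))).add
    (contDiffOn_const.mul (contDiffOn_pdy hηC))).add contDiffOn_const

include hηC hζC hϑC hgrad in
lemma contDiffOn_Gc : ContDiffOn ℝ 1 (Gc γ ε₁ η ζ ϑ) strip := by
  have hden : ∀ q ∈ strip, (pdy η q)^2 + (pdx η q)^2 ≠ 0 := by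
    intro q hq
    have := (hgrad q hq).ne'
    intro h; apply this; linarith
  have hD : ContDiffOn ℝ 1 (fun q => (pdy η q)^2 + (pdx η q)^2) strip :=
    ((contDiffOn_pdy hηC).pow 2).add ((contDiffOn_pdx hηC).pow 2)
  have hN1 : ContDiffOn ℝ 1
      (fun q => pdx η q * ((pdx ζ q)^2 - (pdy ζ q)^2) + 2*(pdy η q)*(pdy ζ q)*(pdx ζ q)) strip :=
    ((contDiffOn_pdx hηC).mul (((contDiffOn_pdx hζC).pow 2).sub ((contDiffOn_pdy hζC).pow 2))).add
      (((contDiffOn_const.mul (contDiffOn_pdy hηC)).mul (contDiffOn_pdy hζC)).mul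
        (contDiffOn_pdx hζC))
  have hN2 : ContDiffOn ℝ 1
      (fun q => pdx η q * ((pdx ϑ q)^2 - (pdy ϑ q)^2) + 2*(pdy η q)*(pdy ϑ q)*(pdx ϑ q)) strip :=
    ((contDiffOn_pdx hηC).mul (((contDiffOn_pdx hϑC).pow 2).sub ((contDiffOn_pdy hϑC).pow 2))).add
      (((contDiffOn_const.mul (contDiffOn_pdy hηC)).mul (contDiffOn_pdy hϑC)).mul
        (contDiffOn_pdx hϑC))
  exact (((hN1.div hD hden).add (contDiffOn_const.mul (hN2.div hD hden))).add
    (contDiffOn_const.mul (contDiffOn_pdx hηC))).add contDiffOn_const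

end Context

section Swap

lemma Dform_swap1 {u1 u2 v1 v2 w1 w2 a b c d e f ε₁ k : ℝ} (h : u1^2+u2^2 ≠ 0) :
    Dform ε₁ k u1 u2 v1 v2 w1 w2 a b c d e f
      = Dform ε₁ k u2 u1 v2 v1 w2 w1 (-a) b (-c) d (-e) f := by
  have h2 : u2^2+u1^2 ≠ 0 := by intro hh; exact h (by linarith)
  simp only [Dform]; field_simp; ring

lemma Dform_swap2 {u1 u2 v1 v2 w1 w2 a b c d e f ε₁ k : ℝ} (h : u1^2+u2^2 ≠ 0) :
    Dform ε₁ k u1 u2 v1 v2 w1 w2 b (-a) d (-c) f (-e)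
      = - Dform ε₁ k u2 u1 v2 v1 w2 w1 b a d c f e := by
  have h2 : u2^2+u1^2 ≠ 0 := by intro hh; exact h (by linarith)
  simp only [Dform]; field_simp; ring

end Swap

section Slices

variable (γ ε₁ : ℝ) {η ζ ϑ : ℝ × ℝ → ℝ}
variable (hηC : ContDiffOn ℝ 2 η strip) (hζC : ContDiffOn ℝ 2 ζ strip)
    (hϑC : ContDiffOn ℝ 2 ϑ strip)
    (hgrad : ∀ p ∈ strip, 0 < (pdx η p) ^ 2 + (pdy η p) ^ 2)
variable {p : ℝ × ℝ} (hp : p ∈ stripO)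

include hηC hζC hϑC hgrad hp in
lemma hasDerivAt_Fc_x :
    HasDerivAt (fun s => Fc γ ε₁ η ζ ϑ (s, p.2))
      (Dform ε₁ (1-γ^2) (pdx η p) (pdy η p) (pdx ζ p) (pdy ζ p) (pdx ϑ p) (pdy ϑ p)
        (fderiv ℝ (fderiv ℝ η) p (1,0) (1,0)) (fderiv ℝ (fderiv ℝ η) p (1,0) (0,1))
        (fderiv ℝ (fderiv ℝ ζ) p (1,0) (1,0)) (fderiv ℝ (fderiv ℝ ζ) p (1,0) (0,1))
        (fderiv ℝ (fderiv ℝ ϑ) p (1,0) (1,0)) (fderiv ℝ (fderiv ℝ ϑ) p (1,0) (0,1))) p.1 := by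
  have h := hasDerivAt_Fform
    (hasDerivAt_pd_x hηC hp (1,0)) (hasDerivAt_pd_x hηC hp (0,1))
    (hasDerivAt_pd_x hζC hp (1,0)) (hasDerivAt_pd_x hζC hp (0,1))
    (hasDerivAt_pd_x hϑC hp (1,0)) (hasDerivAt_pd_x hϑC hp (0,1))
    (by simpa [pdx, pdy] using (hgrad p (stripO_subset hp)).ne') ε₁ (1-γ^2) (2*(γ-1-ε₁/2))
  simpa [Fc, pdx, pdy] using h

include hηC hζC hϑC hgrad hp in
lemma hasDerivAt_Fc_y :
    HasDerivAt (fun t => Fc γ ε₁ η ζ ϑ (p.1, t))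
      (Dform ε₁ (1-γ^2) (pdx η p) (pdy η p) (pdx ζ p) (pdy ζ p) (pdx ϑ p) (pdy ϑ p)
        (fderiv ℝ (fderiv ℝ η) p (0,1) (1,0)) (fderiv ℝ (fderiv ℝ η) p (0,1) (0,1))
        (fderiv ℝ (fderiv ℝ ζ) p (0,1) (1,0)) (fderiv ℝ (fderiv ℝ ζ) p (0,1) (0,1))
        (fderiv ℝ (fderiv ℝ ϑ) p (0,1) (1,0)) (fderiv ℝ (fderiv ℝ ϑ) p (0,1) (0,1))) p.2 := by
  have h := hasDerivAt_Fform
    (hasDerivAt_pd_y hηC hp (1,0)) (hasDerivAt_pd_y hηC hp (0,1))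
    (hasDerivAt_pd_y hζC hp (1,0)) (hasDerivAt_pd_y hζC hp (0,1))
    (hasDerivAt_pd_y hϑC hp (1,0)) (hasDerivAt_pd_y hϑC hp (0,1))
    (by simpa [pdx, pdy] using (hgrad p (stripO_subset hp)).ne') ε₁ (1-γ^2) (2*(γ-1-ε₁/2))
  simpa [Fc, pdx, pdy] using h

include hηC hζC hϑC hgrad hp in
lemma hasDerivAt_Gc_x :
    HasDerivAt (fun s => Gc γ ε₁ η ζ ϑ (s, p.2))
      (Dform ε₁ (1-γ^2) (pdy η p) (pdx η p) (pdy ζ p) (pdx ζ p) (pdy ϑ p) (pdx ϑ p)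
        (fderiv ℝ (fderiv ℝ η) p (1,0) (0,1)) (fderiv ℝ (fderiv ℝ η) p (1,0) (1,0))
        (fderiv ℝ (fderiv ℝ ζ) p (1,0) (0,1)) (fderiv ℝ (fderiv ℝ ζ) p (1,0) (1,0))
        (fderiv ℝ (fderiv ℝ ϑ) p (1,0) (0,1)) (fderiv ℝ (fderiv ℝ ϑ) p (1,0) (1,0))) p.1 := by
  have h := hasDerivAt_Fform
    (hasDerivAt_pd_x hηC hp (0,1)) (hasDerivAt_pd_x hηC hp (1,0))
    (hasDerivAt_pd_x hζC hp (0,1)) (hasDerivAt_pd_x hζC hp (1,0))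
    (hasDerivAt_pd_x hϑC hp (0,1)) (hasDerivAt_pd_x hϑC hp (1,0))
    (by
      have := (hgrad p (stripO_subset hp)).ne'
      simp only [pdx, pdy] at this ⊢
      intro hh; apply this; linarith) ε₁ (1-γ^2) 0
  simpa [Gc, pdx, pdy] using h

include hηC hζC hϑC hgrad hp in
lemma hasDerivAt_Gc_y :
    HasDerivAt (fun t => Gc γ ε₁ η ζ ϑ (p.1, t))
      (Dform ε₁ (1-γ^2) (pdy η p) (pdx η p) (pdy ζ p) (pdx ζ p) (pdy ϑ p) (pdx ϑ p)
        (fderiv ℝ (fderiv ℝ η) p (0,1) (0,1)) (fderiv ℝ (fderiv ℝ η) p (0,1) (1,0))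
        (fderiv ℝ (fderiv ℝ ζ) p (0,1) (0,1)) (fderiv ℝ (fderiv ℝ ζ) p (0,1) (1,0))
        (fderiv ℝ (fderiv ℝ ϑ) p (0,1) (0,1)) (fderiv ℝ (fderiv ℝ ϑ) p (0,1) (1,0))) p.2 := by
  have h := hasDerivAt_Fform
    (hasDerivAt_pd_y hηC hp (0,1)) (hasDerivAt_pd_y hηC hp (1,0))
    (hasDerivAt_pd_y hζC hp (0,1)) (hasDerivAt_pd_y hζC hp (1,0))
    (hasDerivAt_pd_y hϑC hp (0,1)) (hasDerivAt_pd_y hϑC hp (1,0))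
    (by
      have := (hgrad p (stripO_subset hp)).ne'
      simp only [pdx, pdy] at this ⊢
      intro hh; apply this; linarith) ε₁ (1-γ^2) 0
  simpa [Gc, pdx, pdy] using h

end Slices

section Key

variable (γ ε₁ : ℝ) {η ζ ϑ : ℝ × ℝ → ℝ}
variable (hηC : ContDiffOn ℝ 2 η strip) (hζC : ContDiffOn ℝ 2 ζ strip)
    (hϑC : ContDiffOn ℝ 2 ϑ strip)
    (hgrad : ∀ p ∈ strip, 0 < (pdx η p) ^ 2 + (pdy η p) ^ 2)
variable {p : ℝ × ℝ} (hp : p ∈ stripO)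

include hηC hζC hϑC hgrad hp in
lemma pdx_Fc_eq :
    pdx (Fc γ ε₁ η ζ ϑ) p
      = Dform ε₁ (1-γ^2) (pdx η p) (pdy η p) (pdx ζ p) (pdy ζ p) (pdx ϑ p) (pdy ϑ p)
        (fderiv ℝ (fderiv ℝ η) p (1,0) (1,0)) (fderiv ℝ (fderiv ℝ η) p (1,0) (0,1))
        (fderiv ℝ (fderiv ℝ ζ) p (1,0) (1,0)) (fderiv ℝ (fderiv ℝ ζ) p (1,0) (0,1))
        (fderiv ℝ (fderiv ℝ ϑ) p (1,0) (1,0)) (fderiv ℝ (fderiv ℝ ϑ) p (1,0) (0,1)) := by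
  have hdiff : DifferentiableAt ℝ (Fc γ ε₁ η ζ ϑ) p :=
    (((contDiffOn_Fc γ ε₁ hηC hζC hϑC hgrad).contDiffAt
      (strip_mem_nhds hp)).differentiableAt one_ne_zero)
  have hline : HasDerivAt (fun s : ℝ => ((s, p.2) : ℝ × ℝ)) ((1:ℝ), (0:ℝ)) p.1 :=
    (hasDerivAt_id p.1).prodMk (hasDerivAt_const p.1 p.2)
  have h2 : HasDerivAt (fun s => Fc γ ε₁ η ζ ϑ (s, p.2)) (fderiv ℝ (Fc γ ε₁ η ζ ϑ) p (1, 0))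
      p.1 := by
    have := hdiff.hasFDerivAt.comp_hasDerivAt p.1 (by simpa using hline)
    exact this
  have := h2.unique (hasDerivAt_Fc_x γ ε₁ hηC hζC hϑC hgrad hp)
  rw [pdx, fderivWithin_of_mem_nhds (strip_mem_nhds hp), this]

include hηC hζC hϑC hgrad hp in
lemma pdy_Fc_eq :
    pdy (Fc γ ε₁ η ζ ϑ) p
      = Dform ε₁ (1-γ^2) (pdx η p) (pdy η p) (pdx ζ p) (pdy ζ p) (pdx ϑ p) (pdy ϑ p)
        (fderiv ℝ (fderiv ℝ η) p (0,1) (1,0)) (fderiv ℝ (fderiv ℝ η) p (0,1) (0,1))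
        (fderiv ℝ (fderiv ℝ ζ) p (0,1) (1,0)) (fderiv ℝ (fderiv ℝ ζ) p (0,1) (0,1))
        (fderiv ℝ (fderiv ℝ ϑ) p (0,1) (1,0)) (fderiv ℝ (fderiv ℝ ϑ) p (0,1) (0,1)) := by
  have hdiff : DifferentiableAt ℝ (Fc γ ε₁ η ζ ϑ) p :=
    (((contDiffOn_Fc γ ε₁ hηC hζC hϑC hgrad).contDiffAt
      (strip_mem_nhds hp)).differentiableAt one_ne_zero)
  have hline : HasDerivAt (fun t : ℝ => ((p.1, t) : ℝ × ℝ)) ((0:ℝ), (1:ℝ)) p.2 :=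
    (hasDerivAt_const p.2 p.1).prodMk (hasDerivAt_id p.2)
  have h2 : HasDerivAt (fun t => Fc γ ε₁ η ζ ϑ (p.1, t)) (fderiv ℝ (Fc γ ε₁ η ζ ϑ) p (0, 1))
      p.2 := by
    have := hdiff.hasFDerivAt.comp_hasDerivAt p.2 (by simpa using hline)
    exact this
  have := h2.unique (hasDerivAt_Fc_y γ ε₁ hηC hζC hϑC hgrad hp)
  rw [pdy, fderivWithin_of_mem_nhds (strip_mem_nhds hp), this]

include hηC hζC hϑC hgrad hp in
lemma pdx_Gc_eq :
    pdx (Gc γ ε₁ η ζ ϑ) p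
      = Dform ε₁ (1-γ^2) (pdy η p) (pdx η p) (pdy ζ p) (pdx ζ p) (pdy ϑ p) (pdx ϑ p)
        (fderiv ℝ (fderiv ℝ η) p (1,0) (0,1)) (fderiv ℝ (fderiv ℝ η) p (1,0) (1,0))
        (fderiv ℝ (fderiv ℝ ζ) p (1,0) (0,1)) (fderiv ℝ (fderiv ℝ ζ) p (1,0) (1,0))
        (fderiv ℝ (fderiv ℝ ϑ) p (1,0) (0,1)) (fderiv ℝ (fderiv ℝ ϑ) p (1,0) (1,0)) := by
  have hdiff : DifferentiableAt ℝ (Gc γ ε₁ η ζ ϑ) p :=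
    (((contDiffOn_Gc γ ε₁ hηC hζC hϑC hgrad).contDiffAt
      (strip_mem_nhds hp)).differentiableAt one_ne_zero)
  have hline : HasDerivAt (fun s : ℝ => ((s, p.2) : ℝ × ℝ)) ((1:ℝ), (0:ℝ)) p.1 :=
    (hasDerivAt_id p.1).prodMk (hasDerivAt_const p.1 p.2)
  have h2 : HasDerivAt (fun s => Gc γ ε₁ η ζ ϑ (s, p.2)) (fderiv ℝ (Gc γ ε₁ η ζ ϑ) p (1, 0))
      p.1 := by
    have := hdiff.hasFDerivAt.comp_hasDerivAt p.1 (by simpa using hline)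
    exact this
  have := h2.unique (hasDerivAt_Gc_x γ ε₁ hηC hζC hϑC hgrad hp)
  rw [pdx, fderivWithin_of_mem_nhds (strip_mem_nhds hp), this]

include hηC hζC hϑC hgrad hp in
lemma pdy_Gc_eq :
    pdy (Gc γ ε₁ η ζ ϑ) p
      = Dform ε₁ (1-γ^2) (pdy η p) (pdx η p) (pdy ζ p) (pdx ζ p) (pdy ϑ p) (pdx ϑ p)
        (fderiv ℝ (fderiv ℝ η) p (0,1) (0,1)) (fderiv ℝ (fderiv ℝ η) p (0,1) (1,0))
        (fderiv ℝ (fderiv ℝ ζ) p (0,1) (0,1)) (fderiv ℝ (fderiv ℝ ζ) p (0,1) (1,0))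
        (fderiv ℝ (fderiv ℝ ϑ) p (0,1) (0,1)) (fderiv ℝ (fderiv ℝ ϑ) p (0,1) (1,0)) := by
  have hdiff : DifferentiableAt ℝ (Gc γ ε₁ η ζ ϑ) p :=
    (((contDiffOn_Gc γ ε₁ hηC hζC hϑC hgrad).contDiffAt
      (strip_mem_nhds hp)).differentiableAt one_ne_zero)
  have hline : HasDerivAt (fun t : ℝ => ((p.1, t) : ℝ × ℝ)) ((0:ℝ), (1:ℝ)) p.2 :=
    (hasDerivAt_const p.2 p.1).prodMk (hasDerivAt_id p.2)
  have h2 : HasDerivAt (fun t => Gc γ ε₁ η ζ ϑ (p.1, t)) (fderiv ℝ (Gc γ ε₁ η ζ ϑ) p (0, 1))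
      p.2 := by
    have := hdiff.hasFDerivAt.comp_hasDerivAt p.2 (by simpa using hline)
    exact this
  have := h2.unique (hasDerivAt_Gc_y γ ε₁ hηC hζC hϑC hgrad hp)
  rw [pdy, fderivWithin_of_mem_nhds (strip_mem_nhds hp), this]

end Key

section CR

variable (γ ε₁ : ℝ) {η ζ ϑ : ℝ × ℝ → ℝ}
variable (hηC : ContDiffOn ℝ 2 η strip) (hζC : ContDiffOn ℝ 2 ζ strip)
    (hϑC : ContDiffOn ℝ 2 ϑ strip)
    (hηH : ∀ p ∈ stripO, pdx (pdx η) p + pdy (pdy η) p = 0)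
    (hζH : ∀ p ∈ stripO, pdx (pdx ζ) p + pdy (pdy ζ) p = 0)
    (hϑH : ∀ p ∈ stripO, pdx (pdx ϑ) p + pdy (pdy ϑ) p = 0)
    (hgrad : ∀ p ∈ strip, 0 < (pdx η p) ^ 2 + (pdy η p) ^ 2)
variable {p : ℝ × ℝ} (hp : p ∈ stripO)

include hηC hζC hϑC hηH hζH hϑH hgrad hp in
/-- First Cauchy–Riemann identity: `G_y = F_x`. -/
lemma pdy_Gc_eq_pdx_Fc : pdy (Gc γ ε₁ η ζ ϑ) p = pdx (Fc γ ε₁ η ζ ϑ) p := by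
  rw [pdy_Gc_eq γ ε₁ hηC hζC hϑC hgrad hp, pdx_Fc_eq γ ε₁ hηC hζC hϑC hgrad hp,
    harmonic_translate hηC hp (hηH p hp), harmonic_translate hζC hp (hζH p hp),
    harmonic_translate hϑC hp (hϑH p hp),
    ← pd_symm hηC hp, ← pd_symm hζC hp, ← pd_symm hϑC hp]
  exact (Dform_swap1 (hgrad p (stripO_subset hp)).ne').symm

include hηC hζC hϑC hηH hζH hϑH hgrad hp in
/-- Second Cauchy–Riemann identity: `F_y = -G_x`. -/
lemma pdy_Fc_eq_neg_pdx_Gc : pdy (Fc γ ε₁ η ζ ϑ) p = - pdx (Gc γ ε₁ η ζ ϑ) p := by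
  rw [pdy_Fc_eq γ ε₁ hηC hζC hϑC hgrad hp, pdx_Gc_eq γ ε₁ hηC hζC hϑC hgrad hp,
    harmonic_translate hηC hp (hηH p hp), harmonic_translate hζC hp (hζH p hp),
    harmonic_translate hϑC hp (hϑH p hp),
    pd_symm hηC hp, pd_symm hζC hp, pd_symm hϑC hp]
  exact Dform_swap2 (hgrad p (stripO_subset hp)).ne'

end CR

section FTC

variable (γ ε₁ : ℝ) {η ζ ϑ : ℝ × ℝ → ℝ}
variable (hηC : ContDiffOn ℝ 2 η strip) (hζC : ContDiffOn ℝ 2 ζ strip)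
    (hϑC : ContDiffOn ℝ 2 ϑ strip)
    (hηH : ∀ p ∈ stripO, pdx (pdx η) p + pdy (pdy η) p = 0)
    (hζH : ∀ p ∈ stripO, pdx (pdx ζ) p + pdy (pdy ζ) p = 0)
    (hϑH : ∀ p ∈ stripO, pdx (pdx ϑ) p + pdy (pdy ϑ) p = 0)
    (hB : ∀ x : ℝ, η (x, 0) = 0 ∧ ζ (x, 0) = 0 ∧ ϑ (x, 0) = 0)
    (hgrad : ∀ p ∈ strip, 0 < (pdx η p) ^ 2 + (pdy η p) ^ 2)

include hηC hζC hϑC hB in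
lemma Gc_boundary (x : ℝ) : Gc γ ε₁ η ζ ϑ (x, 0) = 0 := by
  have h1 : pdx η (x, 0) = 0 := pdx_boundary hηC (fun x => (hB x).1) x
  have h2 : pdx ζ (x, 0) = 0 := pdx_boundary hζC (fun x => (hB x).2.1) x
  have h3 : pdx ϑ (x, 0) = 0 := pdx_boundary hϑC (fun x => (hB x).2.2) x
  simp [Gc, Fform, h1, h2, h3]

include hηC hζC hϑC hgrad in
lemma continuousOn_pdx_Fc : ContinuousOn (pdx (Fc γ ε₁ η ζ ϑ)) strip := by
  have h := (contDiffOn_Fc γ ε₁ hηC hζC hϑC hgrad).continuousOn_fderivWithin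
    uniqueDiffOn_strip le_rfl
  exact ((ContinuousLinearMap.apply ℝ ℝ ((1:ℝ),(0:ℝ))).continuous.comp_continuousOn h)

include hηC hζC hϑC hηH hζH hϑH hB hgrad in
/-- FTC: the conjugate `G` is the integral of `F_x`. -/
lemma Gc_eq_integral {p : ℝ × ℝ} (hp : p ∈ stripO) :
    Gc γ ε₁ η ζ ϑ p = ∫ t in (0:ℝ)..p.2, pdx (Fc γ ε₁ η ζ ϑ) (p.1, t) := by
  have h02 : (0:ℝ) ≤ p.2 := le_of_lt hp.1
  have hmaps : ∀ t ∈ Set.Icc (0:ℝ) p.2, ((p.1, t) : ℝ × ℝ) ∈ strip :=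
    fun t ht => ⟨ht.1, le_trans ht.2 (le_of_lt hp.2)⟩
  have hcont : ContinuousOn (fun t => Gc γ ε₁ η ζ ϑ (p.1, t)) (Set.Icc 0 p.2) := by
    apply ((contDiffOn_Gc γ ε₁ hηC hζC hϑC hgrad).continuousOn).comp
      (Continuous.continuousOn (by fun_prop)) hmaps
  have hderiv : ∀ t ∈ Set.Ioo (0:ℝ) p.2, HasDerivWithinAt (fun t => Gc γ ε₁ η ζ ϑ (p.1, t))
      (pdx (Fc γ ε₁ η ζ ϑ) (p.1, t)) (Set.Ioi t) t := by
    intro t ht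
    have hmem : ((p.1, t) : ℝ × ℝ) ∈ stripO := ⟨ht.1, lt_trans ht.2 hp.2⟩
    have h := hasDerivAt_Gc_y γ ε₁ hηC hζC hϑC hgrad hmem
    rw [← pdy_Gc_eq γ ε₁ hηC hζC hϑC hgrad hmem,
      pdy_Gc_eq_pdx_Fc γ ε₁ hηC hζC hϑC hηH hζH hϑH hgrad hmem] at h
    exact h.hasDerivWithinAt
  have hint : IntervalIntegrable (fun t => pdx (Fc γ ε₁ η ζ ϑ) (p.1, t)) MeasureTheory.volume
      0 p.2 := by
    apply ContinuousOn.intervalIntegrable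
    rw [Set.uIcc_of_le h02]
    exact (continuousOn_pdx_Fc γ ε₁ hηC hζC hϑC hgrad).comp
      (Continuous.continuousOn (by fun_prop)) hmaps
  have := intervalIntegral.integral_eq_sub_of_hasDeriv_right_of_le h02 hcont hderiv hint
  rw [this, Gc_boundary γ ε₁ hηC hζC hϑC hB p.1]
  simp

end FTC

section Phi

variable (γ ε₁ : ℝ) {η ζ ϑ : ℝ × ℝ → ℝ}
variable (hηC : ContDiffOn ℝ 2 η strip) (hζC : ContDiffOn ℝ 2 ζ strip)
    (hϑC : ContDiffOn ℝ 2 ϑ strip)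
    (hηH : ∀ p ∈ stripO, pdx (pdx η) p + pdy (pdy η) p = 0)
    (hζH : ∀ p ∈ stripO, pdx (pdx ζ) p + pdy (pdy ζ) p = 0)
    (hϑH : ∀ p ∈ stripO, pdx (pdx ϑ) p + pdy (pdy ϑ) p = 0)
    (hB : ∀ x : ℝ, η (x, 0) = 0 ∧ ζ (x, 0) = 0 ∧ ϑ (x, 0) = 0)
    (hgrad : ∀ p ∈ strip, 0 < (pdx η p) ^ 2 + (pdy η p) ^ 2)

include hηC hζC hϑC hgrad in
lemma hasDerivAt_Fc_slice_x {q : ℝ × ℝ} (hq : q ∈ stripO) :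
    HasDerivAt (fun s => Fc γ ε₁ η ζ ϑ (s, q.2)) (pdx (Fc γ ε₁ η ζ ϑ) q) q.1 := by
  have hdiff : DifferentiableAt ℝ (Fc γ ε₁ η ζ ϑ) q :=
    (((contDiffOn_Fc γ ε₁ hηC hζC hϑC hgrad).contDiffAt
      (strip_mem_nhds hq)).differentiableAt one_ne_zero)
  have hline : HasDerivAt (fun s : ℝ => ((s, q.2) : ℝ × ℝ)) ((1:ℝ), (0:ℝ)) q.1 :=
    (hasDerivAt_id q.1).prodMk (hasDerivAt_const q.1 q.2)
  have h2 := hdiff.hasFDerivAt.comp_hasDerivAt q.1 (by simpa using hline)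
  have h3 : pdx (Fc γ ε₁ η ζ ϑ) q = fderiv ℝ (Fc γ ε₁ η ζ ϑ) q (1, 0) := by
    rw [pdx, fderivWithin_of_mem_nhds (strip_mem_nhds hq)]
  rw [h3]
  exact h2

include hηC hζC hϑC hgrad in
lemma continuousOn_Fc_strip : ContinuousOn (Fc γ ε₁ η ζ ϑ) strip :=
  (contDiffOn_Fc γ ε₁ hηC hζC hϑC hgrad).continuousOn

end Phi
section PhiDeriv

variable (γ ε₁ : ℝ) {η ζ ϑ : ℝ × ℝ → ℝ}
variable (hηC : ContDiffOn ℝ 2 η strip) (hζC : ContDiffOn ℝ 2 ζ strip)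
    (hϑC : ContDiffOn ℝ 2 ϑ strip)
    (hηH : ∀ p ∈ stripO, pdx (pdx η) p + pdy (pdy η) p = 0)
    (hζH : ∀ p ∈ stripO, pdx (pdx ζ) p + pdy (pdy ζ) p = 0)
    (hϑH : ∀ p ∈ stripO, pdx (pdx ϑ) p + pdy (pdy ϑ) p = 0)
    (hB : ∀ x : ℝ, η (x, 0) = 0 ∧ ζ (x, 0) = 0 ∧ ϑ (x, 0) = 0)
    (hgrad : ∀ p ∈ strip, 0 < (pdx η p) ^ 2 + (pdy η p) ^ 2)

include hηC hζC hϑC hηH hζH hϑH hB hgrad in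
set_option maxHeartbeats 2000000 in
lemma hasFDerivAt_Phi {p : ℝ × ℝ} (hp : p ∈ stripO) :
    HasFDerivAt (fun q : ℝ × ℝ => ∫ t in (0:ℝ)..q.2, Fc γ ε₁ η ζ ϑ (q.1, t))
      ((Gc γ ε₁ η ζ ϑ p) • (ContinuousLinearMap.fst ℝ ℝ ℝ)
        + (Fc γ ε₁ η ζ ϑ p) • (ContinuousLinearMap.snd ℝ ℝ ℝ)) p := by
  set F := Fc γ ε₁ η ζ ϑ with hFdef
  set G := Gc γ ε₁ η ζ ϑ with hGdef
  have hy0 : (0:ℝ) < p.2 := hp.1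
  have hy1 : p.2 < 1 := hp.2
  set x := p.1 with hx
  set y := p.2 with hy
  have hFcont := continuousOn_Fc_strip γ ε₁ hηC hζC hϑC hgrad
  have hFxcont := continuousOn_pdx_Fc γ ε₁ hηC hζC hϑC hgrad
  rw [hasFDerivAt_iff_isLittleO_nhds_zero, Asymptotics.isLittleO_iff]
  intro c hc
  have hFat : ContinuousAt F p :=
    (hFcont _ (stripO_subset hp)).continuousAt (strip_mem_nhds hp)
  obtain ⟨δ₁, hδ₁pos, hδ₁⟩ := Metric.continuousAt_iff.1 hFat (c/2) (by linarith)
  have hKsub : (Set.Icc (x-1) (x+1) ×ˢ Set.Icc (0:ℝ) 1) ⊆ strip := fun q hq => hq.2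
  have hK : UniformContinuousOn (pdx F) (Set.Icc (x-1) (x+1) ×ˢ Set.Icc (0:ℝ) 1) :=
    (isCompact_Icc.prod isCompact_Icc).uniformContinuousOn_of_continuous
      (hFxcont.mono hKsub)
  obtain ⟨δ₂, hδ₂pos, hδ₂⟩ := Metric.uniformContinuousOn_iff.1 hK (c/2) (by linarith)
  set δ : ℝ := min (min δ₁ δ₂) (min (min (y/2) ((1-y)/2)) 1) with hδdef
  have hδpos : 0 < δ := by
    refine lt_min (lt_min hδ₁pos hδ₂pos) (lt_min (lt_min ?_ ?_) ?_) <;> linarith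
  have hδ1' : δ ≤ δ₁ := le_trans (min_le_left _ _) (min_le_left _ _)
  have hδ2' : δ ≤ δ₂ := le_trans (min_le_left _ _) (min_le_right _ _)
  have hδy : δ ≤ y/2 := le_trans (min_le_right _ _) (le_trans (min_le_left _ _) (min_le_left _ _))
  have hδy1 : δ ≤ (1-y)/2 :=
    le_trans (min_le_right _ _) (le_trans (min_le_left _ _) (min_le_right _ _))
  have hδ1 : δ ≤ 1 := le_trans (min_le_right _ _) (min_le_right _ _)
  rw [Metric.eventually_nhds_iff]
  refine ⟨δ, hδpos, ?_⟩
  rintro ⟨a, b⟩ hab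
  rw [dist_zero_right] at hab
  have hna : |a| < δ := lt_of_le_of_lt (by
    have := norm_fst_le ((a, b) : ℝ × ℝ); simpa using this) hab
  have hnb : |b| < δ := lt_of_le_of_lt (by
    have := norm_snd_le ((a, b) : ℝ × ℝ); simpa using this) hab
  have hna' : |a| ≤ ‖((a, b) : ℝ × ℝ)‖ := by
    have := norm_fst_le ((a, b) : ℝ × ℝ); simpa using this
  have hnb' : |b| ≤ ‖((a, b) : ℝ × ℝ)‖ := by
    have := norm_snd_le ((a, b) : ℝ × ℝ); simpa using this
  -- integrability of the various slices
  have hmapsA : ∀ t ∈ Set.Icc (0:ℝ) 1, ((x+a, t) : ℝ × ℝ) ∈ strip := fun t ht => ht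
  have hcontA : ContinuousOn (fun t => F (x+a, t)) (Set.Icc (0:ℝ) 1) :=
    hFcont.comp (Continuous.continuousOn (by fun_prop)) hmapsA
  have hcontX : ContinuousOn (fun t => F (x, t)) (Set.Icc (0:ℝ) 1) :=
    hFcont.comp (Continuous.continuousOn (by fun_prop)) (fun t ht => ht)
  have hcontP : ContinuousOn (fun t => pdx F (x, t)) (Set.Icc (0:ℝ) 1) :=
    hFxcont.comp (Continuous.continuousOn (by fun_prop)) (fun t ht => ht)
  have hyb0 : 0 < y + b := by
    rcases abs_lt.1 hnb with ⟨h1, _⟩; linarith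
  have hyb1 : y + b < 1 := by
    rcases abs_lt.1 hnb with ⟨_, h2⟩; linarith
  have hsub1 : Set.uIcc (0:ℝ) y ⊆ Set.Icc (0:ℝ) 1 :=
    Set.uIcc_subset_Icc ⟨le_refl _, by linarith⟩ ⟨by linarith, by linarith⟩
  have hsub2 : Set.uIcc y (y+b) ⊆ Set.Icc (0:ℝ) 1 :=
    Set.uIcc_subset_Icc ⟨by linarith, by linarith⟩ ⟨by linarith, by linarith⟩
  have h1 : IntervalIntegrable (fun t => F (x+a, t)) MeasureTheory.volume 0 y :=
    (hcontA.mono hsub1).intervalIntegrable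
  have h2 : IntervalIntegrable (fun t => F (x+a, t)) MeasureTheory.volume y (y+b) :=
    (hcontA.mono hsub2).intervalIntegrable
  have h3 : IntervalIntegrable (fun t => F (x, t)) MeasureTheory.volume 0 y :=
    (hcontX.mono hsub1).intervalIntegrable
  have h4 : IntervalIntegrable (fun t => pdx F (x, t)) MeasureTheory.volume 0 y :=
    (hcontP.mono hsub1).intervalIntegrable
  have hsplit : (∫ t in (0:ℝ)..y, F (x+a, t)) + (∫ t in y..(y+b), F (x+a, t))
      = ∫ t in (0:ℝ)..(y+b), F (x+a, t) :=
    intervalIntegral.integral_add_adjacent_intervals h1 h2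
  -- the first error term
  have bound1 : ‖(∫ t in y..(y+b), F (x+a, t)) - F p * b‖ ≤ (c/2) * |b| := by
    have heq : (∫ t in y..(y+b), F (x+a, t)) - F p * b
        = ∫ t in y..(y+b), (F (x+a, t) - F p) := by
      rw [intervalIntegral.integral_sub h2 intervalIntegrable_const,
        intervalIntegral.integral_const]
      simp only [smul_eq_mul]; ring
    rw [heq]
    have := intervalIntegral.norm_integral_le_of_norm_le_const
      (C := c/2) (f := fun t => F (x+a, t) - F p) (a := y) (b := y+b) ?_
    · have hyb : y + b - y = b := by ring
      calc ‖∫ t in y..(y+b), (F (x+a, t) - F p)‖ ≤ (c/2) * |y + b - y| := this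
        _ = (c/2) * |b| := by rw [hyb]
    · intro t ht
      have htm : |t - y| ≤ |b| := by
        rcases Set.mem_Ioc.1 ht with ⟨hlo, hhi⟩
        have hmin : y - |b| ≤ min y (y+b) := le_min (by linarith [abs_nonneg b])
          (by linarith [neg_abs_le b])
        have hmax : max y (y+b) ≤ y + |b| := max_le (by linarith [abs_nonneg b])
          (by linarith [le_abs_self b])
        rw [abs_le]
        exact ⟨by linarith [lt_of_le_of_lt hmin hlo], by linarith [le_trans hhi hmax]⟩
      have hdist : dist ((x+a, t) : ℝ × ℝ) p < δ₁ := by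
        rw [← hx, ← hy] at *
        have : dist ((x+a, t) : ℝ × ℝ) (x, y) = max (dist (x+a) x) (dist t y) := rfl
        rw [show p = ((x,y) : ℝ × ℝ) from rfl, this]
        apply max_lt
        · rw [Real.dist_eq]; calc |x + a - x| = |a| := by ring_nf
            _ < δ₁ := lt_of_lt_of_le hna hδ1'
        · rw [Real.dist_eq]
          exact lt_of_le_of_lt htm (lt_of_lt_of_le hnb hδ1')
      have := hδ₁ hdist
      rw [Real.dist_eq] at this
      exact le_of_lt (by simpa [Real.norm_eq_abs] using this)
  -- the second error term
  have hGint : G p = ∫ t in (0:ℝ)..y, pdx F (x, t) := by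
    have := Gc_eq_integral γ ε₁ hηC hζC hϑC hηH hζH hϑH hB hgrad hp
    simpa [← hFdef, ← hGdef, ← hx, ← hy] using this
  have bound2 : ‖(∫ t in (0:ℝ)..y, F (x+a, t)) - (∫ t in (0:ℝ)..y, F (x, t)) - G p * a‖
      ≤ (c/2) * |a| := by
    have heq : (∫ t in (0:ℝ)..y, F (x+a, t)) - (∫ t in (0:ℝ)..y, F (x, t)) - G p * a
        = ∫ t in (0:ℝ)..y, (F (x+a, t) - F (x, t) - a * pdx F (x, t)) := by
      rw [intervalIntegral.integral_sub (h1.sub h3) (h4.const_mul a),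
        intervalIntegral.integral_sub h1 h3, intervalIntegral.integral_const_mul, hGint]
      ring
    rw [heq]
    have := intervalIntegral.norm_integral_le_of_norm_le_const
      (C := (c/2) * |a|) (f := fun t => F (x+a, t) - F (x, t) - a * pdx F (x, t))
      (a := (0:ℝ)) (b := y) ?_
    · calc ‖∫ t in (0:ℝ)..y, (F (x+a, t) - F (x, t) - a * pdx F (x, t))‖
          ≤ ((c/2) * |a|) * |y - 0| := this
        _ = (c/2) * |a| * y := by rw [sub_zero, abs_of_pos hy0]
        _ ≤ (c/2) * |a| := by nlinarith [abs_nonneg a, mul_nonneg (le_of_lt (half_pos hc)) (abs_nonneg a)]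
    · intro t ht
      rcases Set.mem_Ioc.1 ht with ⟨hlo', hhi'⟩
      have hlo : 0 < t := by simpa [min_eq_left hy0.le] using hlo'
      have hhi : t ≤ y := by simpa [max_eq_right hy0.le] using hhi'
      -- FTC in the x direction
      have hderivs : ∀ s ∈ Set.uIcc x (x+a), HasDerivAt (fun s' => F (s', t))
          (pdx F (s, t)) s := by
        intro s _
        have hmem : ((s, t) : ℝ × ℝ) ∈ stripO := ⟨hlo, lt_of_le_of_lt hhi hy1⟩
        exact hasDerivAt_Fc_slice_x γ ε₁ hηC hζC hϑC hgrad hmem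
      have hintx : IntervalIntegrable (fun s => pdx F (s, t)) MeasureTheory.volume x (x+a) := by
        apply ContinuousOn.intervalIntegrable
        apply hFxcont.comp (Continuous.continuousOn (by fun_prop))
        intro s _
        exact mem_strip_mk hlo.le (le_trans hhi hy1.le)
      have hFTC : (∫ s in x..(x+a), pdx F (s, t)) = F (x+a, t) - F (x, t) :=
        intervalIntegral.integral_eq_sub_of_hasDerivAt hderivs hintx
      have hconst : a * pdx F (x, t) = ∫ s in x..(x+a), pdx F (x, t) := by
        rw [intervalIntegral.integral_const, smul_eq_mul]; ring
      have heq2 : F (x+a, t) - F (x, t) - a * pdx F (x, t)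
          = ∫ s in x..(x+a), (pdx F (s, t) - pdx F (x, t)) := by
        rw [intervalIntegral.integral_sub hintx intervalIntegrable_const, hFTC, hconst]
      show ‖F (x + a, t) - F (x, t) - a * pdx F (x, t)‖ ≤ c / 2 * |a|
      rw [heq2]
      have := intervalIntegral.norm_integral_le_of_norm_le_const
        (C := c/2) (f := fun s => pdx F (s, t) - pdx F (x, t)) (a := x) (b := x+a) ?_
      · have hxa : x + a - x = a := by ring
        calc ‖∫ s in x..(x+a), (pdx F (s, t) - pdx F (x, t))‖ ≤ (c/2) * |x + a - x| := this
          _ = (c/2) * |a| := by rw [hxa]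
      · intro s hs
        have hsm : |s - x| ≤ |a| := by
          rcases Set.mem_Ioc.1 hs with ⟨hlo2, hhi2⟩
          have hmin : x - |a| ≤ min x (x+a) := le_min (by linarith [abs_nonneg a])
            (by have := neg_abs_le a; linarith)
          have hmax : max x (x+a) ≤ x + |a| := max_le (by linarith [abs_nonneg a])
            (by have := le_abs_self a; linarith)
          rw [abs_le]; constructor <;> [linarith [lt_of_le_of_lt hmin hlo2]; linarith]
        have hsK : ((s, t) : ℝ × ℝ) ∈ Set.Icc (x-1) (x+1) ×ˢ Set.Icc (0:ℝ) 1 := by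
          constructor
          · rcases abs_le.1 hsm with ⟨hl, hr⟩
            have : |a| ≤ 1 := le_trans hna.le hδ1
            exact ⟨by simp; linarith, by simp; linarith⟩
          · exact ⟨hlo.le, le_trans hhi hy1.le⟩
        have hxK : ((x, t) : ℝ × ℝ) ∈ Set.Icc (x-1) (x+1) ×ˢ Set.Icc (0:ℝ) 1 :=
          ⟨⟨by simp, by simp⟩, ⟨hlo.le, le_trans hhi hy1.le⟩⟩
        have hdist : dist ((s, t) : ℝ × ℝ) ((x, t) : ℝ × ℝ) < δ₂ := by
          have : dist ((s, t) : ℝ × ℝ) ((x, t) : ℝ × ℝ) = max (dist s x) (dist t t) := rfl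
          rw [this, dist_self, Real.dist_eq]
          have h1 : |s - x| < δ₂ := lt_of_le_of_lt hsm (lt_of_lt_of_le hna hδ2')
          exact max_lt h1 hδ₂pos
        have := hδ₂ _ hsK _ hxK hdist
        rw [Real.dist_eq] at this
        exact le_of_lt (by simpa [Real.norm_eq_abs] using this)
  -- assembling
  have hgoal : (∫ t in (0:ℝ)..((p + (a, b) : ℝ × ℝ)).2, F (((p + (a,b) : ℝ × ℝ)).1, t))
      - (∫ t in (0:ℝ)..p.2, F (p.1, t))
      - ((G p) • (ContinuousLinearMap.fst ℝ ℝ ℝ)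
        + (F p) • (ContinuousLinearMap.snd ℝ ℝ ℝ)) (a, b)
      = ((∫ t in y..(y+b), F (x+a, t)) - F p * b)
        + ((∫ t in (0:ℝ)..y, F (x+a, t)) - (∫ t in (0:ℝ)..y, F (x, t)) - G p * a) := by
    have hp1 : ((p + (a, b) : ℝ × ℝ)).1 = x + a := rfl
    have hp2 : ((p + (a, b) : ℝ × ℝ)).2 = y + b := rfl
    rw [hp1, hp2, ← hsplit]
    simp only [ContinuousLinearMap.add_apply, ContinuousLinearMap.coe_smul',
      Pi.smul_apply, ContinuousLinearMap.coe_fst', ContinuousLinearMap.coe_snd',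
      smul_eq_mul]
    rw [← hx, ← hy]
    ring
  rw [hgoal]
  have hsum := norm_add_le ((∫ t in y..(y+b), F (x+a, t)) - F p * b)
    ((∫ t in (0:ℝ)..y, F (x+a, t)) - (∫ t in (0:ℝ)..y, F (x, t)) - G p * a)
  have hc2 : (c/2) * |b| + (c/2) * |a| ≤ c * ‖((a, b) : ℝ × ℝ)‖ := by nlinarith
  linarith

end PhiDeriv

/-- Harmonicity of the flow force flux function: if `η, ζ, ϑ` are `C²` on the closed
strip, harmonic in `R`, vanish on `B`, and `∇η` is nonvanishing, then
`Φ(x,y) = ∫₀^y [(η_y(ζ_y² − ζ_x²) + 2η_xζ_xζ_y)/(η_x² + η_y²)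
  + ε₁(η_y(ϑ_y² − ϑ_x²) + 2η_xϑ_xϑ_y)/(η_x² + η_y²) + (1 − γ²)η_y + 2(γ − 1 − ε₁/2)] dt`
is harmonic in `R` and vanishes on `B`. -/
theorem stmt_14 (γ ε₁ : ℝ) (hε₁ : 0 < ε₁)
    (η ζ ϑ : ℝ × ℝ → ℝ)
    (hηC : ContDiffOn ℝ 2 η strip) (hζC : ContDiffOn ℝ 2 ζ strip)
    (hϑC : ContDiffOn ℝ 2 ϑ strip)
    (hηH : ∀ p ∈ stripO, pdx (pdx η) p + pdy (pdy η) p = 0)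
    (hζH : ∀ p ∈ stripO, pdx (pdx ζ) p + pdy (pdy ζ) p = 0)
    (hϑH : ∀ p ∈ stripO, pdx (pdx ϑ) p + pdy (pdy ϑ) p = 0)
    (hB : ∀ x : ℝ, η (x, 0) = 0 ∧ ζ (x, 0) = 0 ∧ ϑ (x, 0) = 0)
    (hgrad : ∀ p ∈ strip, 0 < (pdx η p) ^ 2 + (pdy η p) ^ 2) :
    let Φ : ℝ × ℝ → ℝ := fun p =>
      ∫ t in (0 : ℝ)..p.2,
        ((pdy η (p.1, t) * ((pdy ζ (p.1, t)) ^ 2 - (pdx ζ (p.1, t)) ^ 2)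
            + 2 * pdx η (p.1, t) * pdx ζ (p.1, t) * pdy ζ (p.1, t))
          / ((pdx η (p.1, t)) ^ 2 + (pdy η (p.1, t)) ^ 2)
        + ε₁ * ((pdy η (p.1, t) * ((pdy ϑ (p.1, t)) ^ 2 - (pdx ϑ (p.1, t)) ^ 2)
            + 2 * pdx η (p.1, t) * pdx ϑ (p.1, t) * pdy ϑ (p.1, t))
          / ((pdx η (p.1, t)) ^ 2 + (pdy η (p.1, t)) ^ 2))
        + (1 - γ ^ 2) * pdy η (p.1, t) + 2 * (γ - 1 - ε₁ / 2))
    (ContDiffOn ℝ 2 Φ stripO ∧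
      ∀ p ∈ stripO, pdx (pdx Φ) p + pdy (pdy Φ) p = 0) ∧
    (∀ x : ℝ, Φ (x, 0) = 0) := by
  intro Φ
  have hΦ : Φ = fun q : ℝ × ℝ => ∫ t in (0:ℝ)..q.2, Fc γ ε₁ η ζ ϑ (q.1, t) := rfl
  -- the derivative of Φ at interior points
  have hD : ∀ p ∈ stripO, HasFDerivAt Φ
      ((Gc γ ε₁ η ζ ϑ p) • (ContinuousLinearMap.fst ℝ ℝ ℝ)
        + (Fc γ ε₁ η ζ ϑ p) • (ContinuousLinearMap.snd ℝ ℝ ℝ)) p := by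
    intro p hp
    rw [hΦ]
    exact hasFDerivAt_Phi γ ε₁ hηC hζC hϑC hηH hζH hϑH hB hgrad hp
  have hpdxΦ : ∀ q ∈ stripO, pdx Φ q = Gc γ ε₁ η ζ ϑ q := by
    intro q hq
    rw [pdx, fderivWithin_of_mem_nhds (strip_mem_nhds hq), (hD q hq).fderiv]
    simp
  have hpdyΦ : ∀ q ∈ stripO, pdy Φ q = Fc γ ε₁ η ζ ϑ q := by
    intro q hq
    rw [pdy, fderivWithin_of_mem_nhds (strip_mem_nhds hq), (hD q hq).fderiv]
    simp
  refine ⟨⟨?_, ?_⟩, ?_⟩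
  · -- C² smoothness on the open strip
    rw [show (2 : WithTop ℕ∞) = 1 + 1 from by norm_num,
      contDiffOn_succ_iff_fderiv_of_isOpen isOpen_stripO]
    refine ⟨fun q hq => (hD q hq).differentiableAt.differentiableWithinAt, ?_, ?_⟩
    · intro h; exact absurd h (by norm_num)
    · have hL : ContDiffOn ℝ 1 (fun q => (Gc γ ε₁ η ζ ϑ q) • (ContinuousLinearMap.fst ℝ ℝ ℝ)
          + (Fc γ ε₁ η ζ ϑ q) • (ContinuousLinearMap.snd ℝ ℝ ℝ)) stripO :=
        (((contDiffOn_Gc γ ε₁ hηC hζC hϑC hgrad).mono stripO_subset).smul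
          contDiffOn_const).add
          (((contDiffOn_Fc γ ε₁ hηC hζC hϑC hgrad).mono stripO_subset).smul contDiffOn_const)
      exact hL.congr (fun q hq => (hD q hq).fderiv)
  · -- harmonicity
    intro p hp
    have hev1 : pdx Φ =ᶠ[𝓝 p] Gc γ ε₁ η ζ ϑ := by
      filter_upwards [isOpen_stripO.mem_nhds hp] with q hq
      exact hpdxΦ q hq
    have hev2 : pdy Φ =ᶠ[𝓝 p] Fc γ ε₁ η ζ ϑ := by
      filter_upwards [isOpen_stripO.mem_nhds hp] with q hq
      exact hpdyΦ q hq
    have h1 : pdx (pdx Φ) p = pdx (Gc γ ε₁ η ζ ϑ) p := by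
      rw [pdx, pdx, fderivWithin_of_mem_nhds (strip_mem_nhds hp),
        fderivWithin_of_mem_nhds (strip_mem_nhds hp), hev1.fderiv_eq]
    have h2 : pdy (pdy Φ) p = pdy (Fc γ ε₁ η ζ ϑ) p := by
      rw [pdy, pdy, fderivWithin_of_mem_nhds (strip_mem_nhds hp),
        fderivWithin_of_mem_nhds (strip_mem_nhds hp), hev2.fderiv_eq]
    rw [h1, h2, pdy_Fc_eq_neg_pdx_Gc γ ε₁ hηC hζC hϑC hηH hζH hϑH hgrad hp]
    ring
  · -- boundary value
    intro x
    rw [hΦ]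
    exact intervalIntegral.integral_same
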